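/- There exist absolute constants C, c > 0 such that the following holds. Let G be a group and let A ⊆ G be a nonempty finite set with k-tripling. Then A^{±2} = (A ∪ A⁻¹)² ∪ {1} is an m-approximate group for some positive integer m ≤ C·k^c. -/

import Mathlib

open Pointwise

def IsApproximateGroup {G : Type*} [Group G] (B : Set G) (m : ℕ) : Prop :=
  1 ∈ B ∧ B⁻¹ = B ∧ ∃ T : Finset G, T.card ≤ m ∧ B * B ⊆ (T : Set G) * B

section aux
open Finset
variable {G : Type*} [Group G] [DecidableEq G] {A : Finset G} {k : ℝ}

lemma alt3 (hA : (#(A ^ 3) : ℝ) ≤ k * #A) (e0 e1 e2 : ℤ)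
    (h0 : |e0| = 1) (h1 : |e1| = 1) (h2 : |e2| = 1) :
    (#(A ^ e0 * A ^ e1 * A ^ e2) : ℝ) ≤ k ^ 3 * #A := by
  have := Finset.small_alternating_pow_of_small_tripling (le_refl 3) hA ![e0, e1, e2]
    (by intro i; fin_cases i <;> simpa)
  simpa [List.finRange_succ, mul_assoc] using this

lemma alt3' (hA : (#(A ^ 3) : ℝ) ≤ k * #A) (B C D : Finset G)
    (hB : B = A ∨ B = A⁻¹) (hC : C = A ∨ C = A⁻¹) (hD : D = A ∨ D = A⁻¹) :
    (#(B * C * D) : ℝ) ≤ k ^ 3 * #A := by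
  have n1 : |(1:ℤ)| = 1 := by norm_num
  have n2 : |(-1:ℤ)| = 1 := by norm_num
  have p1 : A ^ (1:ℤ) = A := zpow_one A
  have p2 : A ^ (-1:ℤ) = A⁻¹ := by rw [zpow_neg, zpow_one]
  rcases hB with rfl | rfl <;> rcases hC with rfl | rfl <;> rcases hD with rfl | rfl
  · have := alt3 hA 1 1 1 n1 n1 n1; rwa [p1] at this
  · have := alt3 hA 1 1 (-1) n1 n1 n2; rwa [p1, p2] at this
  · have := alt3 hA 1 (-1) 1 n1 n2 n1; rwa [p1, p2] at this
  · have := alt3 hA 1 (-1) (-1) n1 n2 n2; rwa [p1, p2] at this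
  · have := alt3 hA (-1) 1 1 n2 n1 n1; rwa [p1, p2] at this
  · have := alt3 hA (-1) 1 (-1) n2 n1 n2; rwa [p1, p2] at this
  · have := alt3 hA (-1) (-1) 1 n2 n2 n1; rwa [p1, p2] at this
  · have := alt3 hA (-1) (-1) (-1) n2 n2 n2; rwa [p2] at this

lemma cube_bound (hA : (#(A ^ 3) : ℝ) ≤ k * #A) :
    (#((A ∪ A⁻¹) ^ 3) : ℝ) ≤ 8 * k ^ 3 * #A := by
  have key2 : ∀ X Y : Finset G, ∀ x y : ℝ, (#X : ℝ) ≤ x → (#Y : ℝ) ≤ y →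
      (#(X ∪ Y) : ℝ) ≤ x + y := fun X Y x y hx hy =>
    le_trans (by exact_mod_cast card_union_le X Y) (add_le_add hx hy)
  have e : (A ∪ A⁻¹) ^ 3 = A * A * A ∪ A⁻¹ * A * A ∪ (A * A⁻¹ * A ∪ A⁻¹ * A⁻¹ * A) ∪
      (A * A * A⁻¹ ∪ A⁻¹ * A * A⁻¹ ∪ (A * A⁻¹ * A⁻¹ ∪ A⁻¹ * A⁻¹ * A⁻¹)) := by
    rw [pow_succ, pow_succ, pow_one]
    simp only [union_mul, mul_union]
  have b : ∀ B C D : Finset G, (B = A ∨ B = A⁻¹) → (C = A ∨ C = A⁻¹) → (D = A ∨ D = A⁻¹) →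
      (#(B * C * D) : ℝ) ≤ k ^ 3 * #A := fun B C D hB hC hD => alt3' hA B C D hB hC hD
  have t1 := b A A A (Or.inl rfl) (Or.inl rfl) (Or.inl rfl)
  have t2 := b A⁻¹ A A (Or.inr rfl) (Or.inl rfl) (Or.inl rfl)
  have t3 := b A A⁻¹ A (Or.inl rfl) (Or.inr rfl) (Or.inl rfl)
  have t4 := b A⁻¹ A⁻¹ A (Or.inr rfl) (Or.inr rfl) (Or.inl rfl)
  have t5 := b A A A⁻¹ (Or.inl rfl) (Or.inl rfl) (Or.inr rfl)
  have t6 := b A⁻¹ A A⁻¹ (Or.inr rfl) (Or.inl rfl) (Or.inr rfl)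
  have t7 := b A A⁻¹ A⁻¹ (Or.inl rfl) (Or.inr rfl) (Or.inr rfl)
  have t8 := b A⁻¹ A⁻¹ A⁻¹ (Or.inr rfl) (Or.inr rfl) (Or.inr rfl)
  have h := key2 _ _ _ _ (key2 _ _ _ _ (key2 _ _ _ _ t1 t2) (key2 _ _ _ _ t3 t4))
    (key2 _ _ _ _ (key2 _ _ _ _ t5 t6) (key2 _ _ _ _ t7 t8))
  rw [e]
  linarith [h]
end aux

theorem small_tripling_approximate_group :
    ∃ C c : ℝ, 0 < C ∧ 0 < c ∧
      ∀ (G : Type) (_ : Group G) (A : Set G) (k : ℝ), 1 ≤ k → A.Nonempty → A.Finite →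
        ((A * A * A).ncard : ℝ) ≤ k * A.ncard →
        ∃ m : ℕ, 0 < m ∧ (m : ℝ) ≤ C * k ^ c ∧
          IsApproximateGroup ((A ∪ A⁻¹) ^ 2 ∪ {1}) m := by
  classical
  refine ⟨1025, 9, by norm_num, by norm_num, ?_⟩
  intro G _ A k hk hne hfin htrip
  set A' : Finset G := hfin.toFinset with hA'
  have hcoe : (A' : Set G) = A := hfin.coe_toFinset
  have hne' : A'.Nonempty := by rwa [← Finset.coe_nonempty, hcoe]
  have htrip' : (Finset.card (A' ^ 3) : ℝ) ≤ k * A'.card := by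
    have : ((A' ^ 3 : Finset G) : Set G) = A * A * A := by
      rw [pow_succ, pow_succ, pow_one]; push_cast [hcoe]; rfl
    have h1 : (A' ^ 3).card = (A * A * A).ncard := by
      rw [← Set.ncard_coe_finset, this]
    have h2 : A'.card = A.ncard := by rw [← Set.ncard_coe_finset, hcoe]
    rw [h1, h2]; exact htrip
  set S : Finset G := A' ∪ A'⁻¹ with hS
  have hk0 : (0:ℝ) < k := lt_of_lt_of_le one_pos hk
  have hAS : A' ⊆ S := Finset.subset_union_left
  have hSsymm : S⁻¹ = S := by
    apply Finset.coe_injective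
    push_cast [hS]
    rw [Set.union_inv, inv_inv, Set.union_comm]
  have hScard : (S.card : ℝ) ≤ 2 * A'.card := by
    have h := Finset.card_union_le A' A'⁻¹
    have hinv : A'⁻¹.card = A'.card := Finset.card_inv A'
    rw [hS]
    calc (Finset.card (A' ∪ A'⁻¹) : ℝ) ≤ A'.card + A'⁻¹.card := by exact_mod_cast h
      _ = 2 * A'.card := by rw [hinv]; ring
  have hApos : (0:ℝ) < A'.card := by exact_mod_cast Finset.card_pos.2 hne'
  have hS3 : (Finset.card (S ^ 3) : ℝ) ≤ (8 * k ^ 3) * S.card := by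
    refine (cube_bound htrip').trans ?_
    have hle : (A'.card : ℝ) ≤ S.card := by exact_mod_cast Finset.card_le_card hAS
    calc (8 : ℝ) * k ^ 3 * A'.card ≤ 8 * k ^ 3 * S.card := by gcongr
      _ = (8 * k ^ 3) * S.card := rfl
  have hS5 : (Finset.card (S ^ 5) : ℝ) ≤ (8 * k ^ 3) ^ 3 * S.card :=
    Finset.small_pow_of_small_tripling (by norm_num) hS3 hSsymm
  have hcov : (Finset.card (S ^ 4 * A') : ℝ) ≤ (1024 * k ^ 9) * A'.card := by
    have hsub : S ^ 4 * A' ⊆ S ^ 5 := by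
      rw [show (5:ℕ) = 4 + 1 from rfl, pow_succ]
      exact Finset.mul_subset_mul_left hAS
    calc (Finset.card (S ^ 4 * A') : ℝ) ≤ Finset.card (S ^ 5) := by
          exact_mod_cast Finset.card_le_card hsub
      _ ≤ (8 * k ^ 3) ^ 3 * S.card := hS5
      _ ≤ (8 * k ^ 3) ^ 3 * (2 * A'.card) := by gcongr
      _ = (1024 * k ^ 9) * A'.card := by ring
  obtain ⟨F, hFsub, hFcard, hFcov⟩ := Finset.ruzsa_covering_mul hne' hcov
  obtain ⟨a, ha⟩ := hne
  have h1 : (1:G) ∈ (A ∪ A⁻¹) ^ 2 := by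
    rw [sq]
    have := Set.mul_mem_mul (Set.mem_union_left A⁻¹ ha)
      (Set.mem_union_right A (Set.inv_mem_inv.2 ha))
    rwa [mul_inv_cancel] at this
  have hBe : (A ∪ A⁻¹) ^ 2 ∪ {1} = (A ∪ A⁻¹) ^ 2 :=
    Set.union_eq_self_of_subset_right (Set.singleton_subset_iff.2 h1)
  refine ⟨F.card + 1, Nat.succ_pos _, ?_, ?_, ?_, ?_⟩
  · push_cast
    have h9 : (1:ℝ) ≤ k ^ (9:ℕ) := one_le_pow₀ hk
    have hre : (1025:ℝ) * k ^ (9:ℝ) = 1025 * k ^ (9:ℕ) := by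
      rw [← Real.rpow_natCast k 9]; norm_num
    rw [hre]
    linarith
  · right; rfl
  · have hsymm : (A ∪ A⁻¹)⁻¹ = A ∪ A⁻¹ := by
      rw [Set.union_inv, inv_inv, Set.union_comm]
    rw [hBe, sq, mul_inv_rev, hsymm, ← sq]
  · have hScoe : (S : Set G) = A ∪ A⁻¹ := by
      push_cast [hS, hcoe]; rfl
    have hB2 : (A ∪ A⁻¹) ^ 2 = ((S ^ 2 : Finset G) : Set G) := by
      rw [← hScoe]; push_cast; rfl
    refine ⟨F, Nat.le_succ _, ?_⟩
    rw [hBe, hB2, ← Finset.coe_mul, ← Finset.coe_mul, ← pow_add]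
    have hsub2 : S ^ 4 ⊆ F * S ^ 2 := by
      refine hFcov.trans ?_
      refine Finset.mul_subset_mul_left ?_
      rw [div_eq_mul_inv, sq]
      exact Finset.mul_subset_mul hAS (by rw [← hSsymm]; exact Finset.inv_subset_inv hAS)
    exact_mod_cast Finset.coe_subset.2 hsub2
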